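/- For every ρ ∈ (0,1), the map (α,β) ↦ F(α,β;ρ) is real-analytic on ℝ². -/

import Mathlib

/-- `x·u(x)` for interaction strength `α`: the quantity
`(α/2)x + log 2 + (1/2)x log x − (1/2)(x−2) log(x−2)`
(convention `0 log 0 = 0`, automatic since `Real.log 0 = 0`). The same formula
with `β` in place of `α` gives `y·v(y)`. -/
noncomputable def xu (α x : ℝ) : ℝ :=
  α / 2 * x + Real.log 2 + (1 / 2) * x * Real.log x - (1 / 2) * (x - 2) * Real.log (x - 2)

/-- The integrand of the variational formula for `F(α,β;ρ)`:
`[ρ x u(x) + (1−ρ) y v(y)] / [ρ x + (1−ρ) y]`. -/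
noncomputable def Fint (α β ρ x y : ℝ) : ℝ :=
  (ρ * xu α x + (1 - ρ) * xu β y) / (ρ * x + (1 - ρ) * y)

/-- `F(α,β;ρ) = sup_{x ≥ 2, y ≥ 2} [ρ x u(x) + (1−ρ) y v(y)] / [ρ x + (1−ρ) y]`. -/
noncomputable def Fsup (α β ρ : ℝ) : ℝ :=
  sSup {z : ℝ | ∃ x y : ℝ, 2 ≤ x ∧ 2 ≤ y ∧ z = Fint α β ρ x y}


open Real Filter Set

lemma analyticAt_rlog {x : ℝ} (hx : 0 < x) : AnalyticAt ℝ Real.log x := by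
  have h2 : AnalyticAt ℝ (fun t : ℝ => Complex.log t) x :=
    ((analyticAt_clog (Complex.ofReal_mem_slitPlane.2 hx)).restrictScalars).comp
      (Complex.ofRealCLM.analyticAt _)
  have h1 : AnalyticAt ℝ (fun t : ℝ => (Complex.log t).re) x :=
    (Complex.reCLM.analyticAt _).comp h2
  exact h1.congr (Filter.Eventually.of_forall fun t => Complex.log_ofReal_re t)

noncomputable def Emap (ρ : ℝ) (a : ℝ) : ℝ :=
  Real.log (1 + Real.exp a) - Real.log (1 + Real.exp (Real.log 4 / (1 - ρ) - ρ / (1 - ρ) * a))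

lemma hasDerivAt_Emap (ρ a : ℝ) :
    HasDerivAt (Emap ρ)
      (Real.exp a / (1 + Real.exp a)
        + ρ / (1 - ρ) * (Real.exp (Real.log 4 / (1 - ρ) - ρ / (1 - ρ) * a)
            / (1 + Real.exp (Real.log 4 / (1 - ρ) - ρ / (1 - ρ) * a)))) a := by
  set c1 := Real.log 4 / (1 - ρ)
  set c2 := ρ / (1 - ρ)
  have hpos1 : (0:ℝ) < 1 + Real.exp a := by positivity
  have hpos2 : (0:ℝ) < 1 + Real.exp (c1 - c2 * a) := by positivity
  have h1 : HasDerivAt (fun t : ℝ => Real.log (1 + Real.exp t)) (Real.exp a / (1 + Real.exp a)) a := by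
    have := (Real.hasDerivAt_log (ne_of_gt hpos1)).comp a ((Real.hasDerivAt_exp a).const_add 1)
    simpa [div_eq_inv_mul, Function.comp_def] using this
  have hinner : HasDerivAt (fun t : ℝ => c1 - c2 * t) (-c2) a := by
    simpa using ((hasDerivAt_id a).const_mul c2).const_sub c1
  have h2 : HasDerivAt (fun t : ℝ => Real.log (1 + Real.exp (c1 - c2 * t)))
      ((1 + Real.exp (c1 - c2 * a))⁻¹ * (Real.exp (c1 - c2 * a) * (-c2))) a := by
    have hexp : HasDerivAt (fun t : ℝ => 1 + Real.exp (c1 - c2 * t))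
        (Real.exp (c1 - c2 * a) * (-c2)) a := by
      have h := (Real.hasDerivAt_exp (c1 - c2 * a)).comp a hinner
      exact h.const_add 1
    exact (Real.hasDerivAt_log (ne_of_gt hpos2)).comp a hexp
  have := h1.sub h2
  refine this.congr_deriv ?_
  ring

lemma strictMono_Emap (ρ : ℝ) (h0 : 0 < ρ) (h1 : ρ < 1) : StrictMono (Emap ρ) := by
  apply strictMono_of_deriv_pos
  intro a
  rw [(hasDerivAt_Emap ρ a).deriv]
  have : 0 < ρ / (1 - ρ) := by
    apply div_pos h0; linarith
  positivity

lemma continuous_Emap (ρ : ℝ) : Continuous (Emap ρ) := by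
  have : Differentiable ℝ (Emap ρ) := fun a => (hasDerivAt_Emap ρ a).differentiableAt
  exact this.continuous

lemma surjective_Emap (ρ : ℝ) (h0 : 0 < ρ) (h1 : ρ < 1) : Function.Surjective (Emap ρ) := by
  set c1 := Real.log 4 / (1 - ρ)
  set c2 := ρ / (1 - ρ) with hc2
  have hc2pos : 0 < c2 := div_pos h0 (by linarith)
  apply (continuous_Emap ρ).surjective
  · -- atTop
    apply tendsto_atTop_mono' _ (_ : ∀ᶠ a in atTop, Real.log (1 + Real.exp a) - Real.log (1 + Real.exp c1) ≤ Emap ρ a)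
    · have hl : Tendsto (fun a : ℝ => Real.log (1 + Real.exp a)) atTop atTop := by
        apply Real.tendsto_log_atTop.comp
        exact tendsto_atTop_add_const_left _ 1 Real.tendsto_exp_atTop
      exact tendsto_atTop_add_const_right _ _ hl
    · filter_upwards [eventually_ge_atTop (0:ℝ)] with a ha
      have : Real.exp (c1 - c2 * a) ≤ Real.exp c1 := by
        apply Real.exp_le_exp.2; nlinarith
      have hlog : Real.log (1 + Real.exp (c1 - c2 * a)) ≤ Real.log (1 + Real.exp c1) := by
        apply Real.log_le_log (by positivity); linarith
      simp only [Emap]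
      linarith
  · -- atBot
    apply tendsto_atBot_mono' _ (_ : ∀ᶠ a in atBot, Emap ρ a ≤ (Real.log 2 - c1) + c2 * a)
    · apply tendsto_atBot_add_const_left
      exact (tendsto_id.const_mul_atBot hc2pos)
    · filter_upwards [eventually_le_atBot (0:ℝ)] with a ha
      have h2 : Real.log (1 + Real.exp a) ≤ Real.log 2 := by
        apply Real.log_le_log (by positivity)
        have := Real.exp_le_one_iff.2 ha
        linarith
      have h3 : c1 - c2 * a ≤ Real.log (1 + Real.exp (c1 - c2 * a)) := by
        calc c1 - c2 * a = Real.log (Real.exp (c1 - c2 * a)) := (Real.log_exp _).symm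
        _ ≤ _ := Real.log_le_log (Real.exp_pos _) (by linarith)
      simp only [Emap]
      linarith

noncomputable def ginv (ρ : ℝ) (h0 : 0 < ρ) (h1 : ρ < 1) : ℝ → ℝ :=
  ((strictMono_Emap ρ h0 h1).orderIsoOfSurjective _ (surjective_Emap ρ h0 h1)).symm

lemma Emap_ginv (ρ : ℝ) (h0 : 0 < ρ) (h1 : ρ < 1) (δ : ℝ) : Emap ρ (ginv ρ h0 h1 δ) = δ :=
  StrictMono.orderIsoOfSurjective_self_symm_apply _ _ _ δ

lemma analyticAt_Emap (ρ : ℝ) (h1 : ρ < 1) (a : ℝ) : AnalyticAt ℝ (Emap ρ) a := by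
  unfold Emap
  apply AnalyticAt.sub
  · exact (analyticAt_rlog (by positivity)).comp ((analyticAt_const.add (analyticAt_rexp.comp analyticAt_id)))
  · exact (analyticAt_rlog (by positivity)).comp
      (analyticAt_const.add (analyticAt_rexp.comp (analyticAt_const.sub (analyticAt_const.mul analyticAt_id))))

lemma analyticAt_ginv (ρ : ℝ) (h0 : 0 < ρ) (h1 : ρ < 1) (δ : ℝ) :
    AnalyticAt ℝ (ginv ρ h0 h1) δ := by
  set e := (strictMono_Emap ρ h0 h1).orderIsoOfSurjective _ (surjective_Emap ρ h0 h1) with he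
  set ph := e.toHomeomorph.toOpenPartialHomeomorph with hph
  have hcoe : ⇑ph = Emap ρ := by
    rw [hph]; ext x
    simp only [Homeomorph.toOpenPartialHomeomorph_apply, OrderIso.coe_toHomeomorph]
    rfl
  set pt := ph.symm δ with hpt
  set d := Real.exp pt / (1 + Real.exp pt)
        + ρ / (1 - ρ) * (Real.exp (Real.log 4 / (1 - ρ) - ρ / (1 - ρ) * pt)
            / (1 + Real.exp (Real.log 4 / (1 - ρ) - ρ / (1 - ρ) * pt))) with hd
  have hdpos : 0 < d := by
    have : 0 < ρ / (1 - ρ) := div_pos h0 (by linarith)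
    rw [hd]; positivity
  have hsymm : AnalyticAt ℝ (⇑ph.symm) δ := by
    apply ph.analyticAt_symm (i := ContinuousLinearEquiv.unitsEquivAut ℝ (Units.mk0 d hdpos.ne'))
    · simp [hph, Homeomorph.toOpenPartialHomeomorph]
    · rw [hcoe]; exact analyticAt_Emap ρ h1 pt
    · rw [hcoe]
      have hfd : HasFDerivAt (Emap ρ) (ContinuousLinearMap.smulRight (1 : ℝ →L[ℝ] ℝ) d) pt :=
        (hasDerivAt_Emap ρ pt).hasFDerivAt
      rw [hfd.fderiv]
      refine ContinuousLinearMap.ext fun x => ?_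
      simp [ContinuousLinearEquiv.unitsEquivAut, mul_comm]
  have hg : ⇑ph.symm = ginv ρ h0 h1 := by
    ext x
    simp [hph, Homeomorph.toOpenPartialHomeomorph, ginv, he]
  rwa [hg] at hsymm

lemma continuous_xu (γ : ℝ) : Continuous (xu γ) := by
  unfold xu
  have h1 : Continuous fun x : ℝ => (1 / 2 : ℝ) * x * Real.log x := by
    have : Continuous fun x : ℝ => (1/2 : ℝ) * (x * Real.log x) :=
      continuous_const.mul Real.continuous_mul_log
    simpa [mul_assoc] using this
  have h2 : Continuous fun x : ℝ => (1 / 2 : ℝ) * (x - 2) * Real.log (x - 2) := by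
    have : Continuous fun x : ℝ => (1/2 : ℝ) * ((x - 2) * Real.log (x - 2)) :=
      continuous_const.mul (Real.continuous_mul_log.comp (continuous_id.sub continuous_const))
    simpa [mul_assoc, Function.comp] using this
  exact (((continuous_const.mul continuous_id).add continuous_const).add h1).sub h2

lemma hasDerivAt_xu (γ : ℝ) {x : ℝ} (hx : 2 < x) :
    HasDerivAt (xu γ) (γ / 2 + (1 / 2) * Real.log x - (1 / 2) * Real.log (x - 2)) x := by
  have hx0 : x ≠ 0 := by linarith
  have hx2 : x - 2 ≠ 0 := by linarith
  have h1 : HasDerivAt (fun x : ℝ => x * Real.log x) (Real.log x + 1) x :=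
    Real.hasDerivAt_mul_log hx0
  have h2 : HasDerivAt (fun x : ℝ => (x - 2) * Real.log (x - 2)) (Real.log (x - 2) + 1) x := by
    have := (Real.hasDerivAt_mul_log hx2).comp x ((hasDerivAt_id x).sub_const 2)
    simpa [Function.comp_def] using this
  have := ((((hasDerivAt_id x).const_mul (γ/2)).add_const (Real.log 2)).add
    (h1.const_mul (1/2 : ℝ))).sub (h2.const_mul (1/2 : ℝ))
  have heq : ∀ y : ℝ, γ / 2 * y + Real.log 2 + 1 / 2 * (y * Real.log y) - 1 / 2 * ((y - 2) * Real.log (y - 2)) = xu γ y := by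
    intro y; unfold xu; ring
  refine HasDerivAt.congr_deriv (this.congr_of_eventuallyEq ?_) (by ring)
  exact Filter.Eventually.of_forall fun y => (heq y).symm

lemma log_x0 {s : ℝ} (hs : 0 < s) :
    Real.log (2 + 2 / (Real.exp (2 * s) - 1)) = Real.log 2 + 2 * s - Real.log (Real.exp (2 * s) - 1) := by
  have hE : 1 < Real.exp (2 * s) := by { rw [Real.one_lt_exp_iff]; linarith }
  have hE1 : 0 < Real.exp (2 * s) - 1 := by linarith
  have hx0 : 2 + 2 / (Real.exp (2 * s) - 1) = 2 * Real.exp (2 * s) / (Real.exp (2 * s) - 1) := by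
    field_simp; ring
  rw [hx0, Real.log_div (by positivity) hE1.ne', Real.log_mul (by norm_num) (Real.exp_pos _).ne',
    Real.log_exp]

lemma xu_eq (γ s : ℝ) (hs : 0 < s) :
    xu γ (2 + 2 / (Real.exp (2 * s) - 1)) =
      (γ / 2 + s) * (2 + 2 / (Real.exp (2 * s) - 1)) + Real.log 4 - Real.log (Real.exp (2 * s) - 1) := by
  have hE : 1 < Real.exp (2 * s) := by { rw [Real.one_lt_exp_iff]; linarith }
  have hE1 : 0 < Real.exp (2 * s) - 1 := by linarith
  set x₀ := 2 + 2 / (Real.exp (2 * s) - 1) with hx₀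
  have h1 : Real.log x₀ = Real.log 2 + 2 * s - Real.log (Real.exp (2 * s) - 1) := log_x0 hs
  have h2 : Real.log (x₀ - 2) = Real.log 2 - Real.log (Real.exp (2 * s) - 1) := by
    have : x₀ - 2 = 2 / (Real.exp (2 * s) - 1) := by rw [hx₀]; ring
    rw [this, Real.log_div (by norm_num) hE1.ne']
  have h4 : Real.log 4 = 2 * Real.log 2 := by
    rw [show (4:ℝ) = 2 ^ 2 by norm_num, Real.log_pow]; push_cast; ring
  unfold xu
  rw [h1, h2, h4]
  ring

lemma xu_le (γ s : ℝ) (hs : 0 < s) {x : ℝ} (hx : 2 ≤ x) :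
    xu γ x ≤ (γ / 2 + s) * x + Real.log 4 - Real.log (Real.exp (2 * s) - 1) := by
  have hE : 1 < Real.exp (2 * s) := by rw [Real.one_lt_exp_iff]; linarith
  have hE1 : 0 < Real.exp (2 * s) - 1 := by linarith
  set E := Real.exp (2 * s) with hEdef
  set x₀ := 2 + 2 / (E - 1) with hx₀def
  have h2x₀ : 2 < x₀ := by
    have h : 0 < 2 / (E - 1) := by positivity
    rw [hx₀def]; linarith
  set φ : ℝ → ℝ := fun t => (γ / 2 + s) * t + Real.log 4 - Real.log (E - 1) - xu γ t with hφ
  -- suffices φ x ≥ 0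
  have hφx₀ : φ x₀ = 0 := by
    rw [hφ]; simp only
    rw [xu_eq γ s hs]
    ring
  have hφcont : Continuous φ :=
    (((continuous_const.mul continuous_id).add continuous_const).sub continuous_const).sub (continuous_xu γ)
  have hφderiv : ∀ t : ℝ, 2 < t →
      HasDerivAt φ (s - (1 / 2) * Real.log t + (1 / 2) * Real.log (t - 2)) t := by
    intro t ht
    have := (((hasDerivAt_id t).const_mul (γ/2 + s)).add_const (Real.log 4)).sub_const (Real.log (E - 1))
    have h := this.sub (hasDerivAt_xu γ ht)
    refine HasDerivAt.congr_deriv (h.congr_of_eventuallyEq ?_) (by ring)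
    exact Filter.Eventually.of_forall fun y => by simp [hφ]
  have key : ∀ t : ℝ, 2 ≤ t → 0 ≤ φ t := by
    intro t ht
    rcases le_total t x₀ with hcase | hcase
    · -- antitone on [2, x₀]
      have hanti : AntitoneOn φ (Set.Icc 2 x₀) := by
        apply antitoneOn_of_deriv_nonpos (convex_Icc _ _) hφcont.continuousOn
        · intro u hu
          rw [interior_Icc] at hu
          exact (hφderiv u hu.1).differentiableAt.differentiableWithinAt
        · intro u hu
          rw [interior_Icc] at hu
          rw [(hφderiv u hu.1).deriv]
          have hu2 : 0 < u - 2 := by linarith [hu.1]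
          have hlt : E < u / (u - 2) := by
            rw [lt_div_iff₀ hu2]
            have : u - 2 < 2 / (E - 1) := by
              have h6 := hu.2; rw [hx₀def] at h6; linarith
            have h3 : (u - 2) * (E - 1) < 2 := by
              rw [← lt_div_iff₀ hE1]; exact this
            nlinarith
          have hlog : 2 * s < Real.log u - Real.log (u - 2) := by
            rw [← Real.log_div (by linarith) hu2.ne']
            calc 2 * s = Real.log E := (Real.log_exp _).symm
            _ < _ := Real.log_lt_log (by positivity) hlt
          linarith
      have := hanti ⟨ht, hcase⟩ ⟨le_of_lt h2x₀, le_refl _⟩ hcase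
      linarith [hφx₀]
    · -- monotone on [x₀, ∞)
      have hmono : MonotoneOn φ (Set.Ici x₀) := by
        apply monotoneOn_of_deriv_nonneg (convex_Ici _) hφcont.continuousOn
        · intro u hu
          rw [interior_Ici] at hu
          have hux : x₀ < u := hu
          exact (hφderiv u (lt_trans h2x₀ hux)).differentiableAt.differentiableWithinAt
        · intro u hu
          rw [interior_Ici] at hu
          have hux : x₀ < u := hu
          have hu2 : 0 < u - 2 := by linarith
          rw [(hφderiv u (by linarith)).deriv]
          have hlt : u / (u - 2) < E := by
            rw [div_lt_iff₀ hu2]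
            have h5 : 2 / (E - 1) < u - 2 := by
              rw [hx₀def] at hux; linarith
            have h3 : 2 < (u - 2) * (E - 1) := by
              rw [← div_lt_iff₀ hE1]; exact h5
            nlinarith
          have hlog : Real.log u - Real.log (u - 2) < 2 * s := by
            rw [← Real.log_div (by linarith) hu2.ne']
            calc Real.log (u / (u - 2)) < Real.log E := Real.log_lt_log (div_pos (by linarith) hu2) hlt
            _ = 2 * s := Real.log_exp _
          linarith
      have := hmono (Set.mem_Ici.2 (le_refl x₀)) (Set.mem_Ici.2 hcase) hcase
      linarith [hφx₀]
  have := key x hx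
  rw [hφ] at this; simp only at this
  linarith

lemma Fsup_eq (ρ : ℝ) (h0 : 0 < ρ) (h1 : ρ < 1) (α β : ℝ) :
    Fsup α β ρ = α / 2 + 1 / 2 * Real.log (1 + Real.exp (ginv ρ h0 h1 (β - α))) := by
  have h1ρ : 0 < 1 - ρ := by linarith
  set a := ginv ρ h0 h1 (β - α) with ha
  set b := Real.log 4 / (1 - ρ) - ρ / (1 - ρ) * a with hb
  have hEa : Real.log (1 + Real.exp a) - Real.log (1 + Real.exp b) = β - α := Emap_ginv ρ h0 h1 (β - α)
  clear_value a
  set sx := 1 / 2 * Real.log (1 + Real.exp a) with hsx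
  set sy := 1 / 2 * Real.log (1 + Real.exp b) with hsy
  have hsxpos : 0 < sx := by
    rw [hsx]
    have : (1:ℝ) < 1 + Real.exp a := by linarith [Real.exp_pos a]
    have := Real.log_pos this
    linarith
  have hsypos : 0 < sy := by
    rw [hsy]
    have : (1:ℝ) < 1 + Real.exp b := by linarith [Real.exp_pos b]
    have := Real.log_pos this
    linarith
  have hesx : Real.exp (2 * sx) = 1 + Real.exp a := by
    rw [hsx, show 2 * (1 / 2 * Real.log (1 + Real.exp a)) = Real.log (1 + Real.exp a) by ring]
    exact Real.exp_log (by positivity)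
  have hesy : Real.exp (2 * sy) = 1 + Real.exp b := by
    rw [hsy, show 2 * (1 / 2 * Real.log (1 + Real.exp b)) = Real.log (1 + Real.exp b) by ring]
    exact Real.exp_log (by positivity)
  set F := α / 2 + sx with hF
  have hF2 : F = β / 2 + sy := by
    rw [hF, hsx, hsy]; linarith
  have hexa : Real.exp (2 * sx) - 1 = Real.exp a := by rw [hesx]; ring
  have hexb : Real.exp (2 * sy) - 1 = Real.exp b := by rw [hesy]; ring
  clear_value b sx sy F
  -- the zero-sum identity: ρ*(log 4 - a) + (1-ρ)*(log 4 - b) = 0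
  have hzero : ρ * (Real.log 4 - a) + (1 - ρ) * (Real.log 4 - b) = 0 := by
    rw [hb]; field_simp; ring
  -- upper bound
  have hub : ∀ z ∈ {z : ℝ | ∃ x y : ℝ, 2 ≤ x ∧ 2 ≤ y ∧ z = Fint α β ρ x y}, z ≤ F := by
    rintro z ⟨x, y, hx, hy, rfl⟩
    have hS : 0 < ρ * x + (1 - ρ) * y := by nlinarith
    rw [Fint, div_le_iff₀ hS]
    have hbx : xu α x ≤ F * x + (Real.log 4 - a) := by
      have h := xu_le α sx hsxpos hx
      rw [hexa, Real.log_exp] at h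
      rw [hF]; linarith
    have hby : xu β y ≤ F * y + (Real.log 4 - b) := by
      have h := xu_le β sy hsypos hy
      rw [hexb, Real.log_exp] at h
      rw [hF2]; linarith
    have h1 := mul_le_mul_of_nonneg_left hbx (le_of_lt h0)
    have h2 := mul_le_mul_of_nonneg_left hby (le_of_lt h1ρ)
    nlinarith [h1, h2, hzero]
  -- membership
  have hmem : F ∈ {z : ℝ | ∃ x y : ℝ, 2 ≤ x ∧ 2 ≤ y ∧ z = Fint α β ρ x y} := by
    set x₀ := 2 + 2 / (Real.exp (2 * sx) - 1) with hx₀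
    set y₀ := 2 + 2 / (Real.exp (2 * sy) - 1) with hy₀
    have hx₀2 : 2 ≤ x₀ := by
      rw [hx₀, hexa]
      have : 0 < 2 / Real.exp a := by positivity
      linarith
    have hy₀2 : 2 ≤ y₀ := by
      rw [hy₀, hexb]
      have : 0 < 2 / Real.exp b := by positivity
      linarith
    refine ⟨x₀, y₀, hx₀2, hy₀2, ?_⟩
    have hS : 0 < ρ * x₀ + (1 - ρ) * y₀ := by nlinarith
    have heqx : xu α x₀ = F * x₀ + (Real.log 4 - a) := by
      have := xu_eq α sx hsxpos
      rw [← hx₀] at this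
      rw [this, hexa, Real.log_exp, hF]
      ring
    have heqy : xu β y₀ = F * y₀ + (Real.log 4 - b) := by
      have := xu_eq β sy hsypos
      rw [← hy₀] at this
      rw [this, hexb, Real.log_exp, hF2]
      ring
    rw [Fint, heqx, heqy, eq_div_iff hS.ne']
    linarith [hzero]
  -- conclude
  have hne : {z : ℝ | ∃ x y : ℝ, 2 ≤ x ∧ 2 ≤ y ∧ z = Fint α β ρ x y}.Nonempty := ⟨F, hmem⟩
  have hbdd : BddAbove {z : ℝ | ∃ x y : ℝ, 2 ≤ x ∧ 2 ≤ y ∧ z = Fint α β ρ x y} := ⟨F, hub⟩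
  rw [Fsup]
  exact le_antisymm (csSup_le hne hub) (le_csSup hbdd hmem)



/-- For every `ρ ∈ (0,1)`, `(α,β) ↦ F(α,β;ρ)` is real-analytic on `ℝ²`. -/
theorem stmt18 (ρ : ℝ) (hρ0 : 0 < ρ) (hρ1 : ρ < 1) :
    AnalyticOnNhd ℝ (fun q : ℝ × ℝ => Fsup q.1 q.2 ρ) Set.univ := by
  have heq : (fun q : ℝ × ℝ => Fsup q.1 q.2 ρ)
      = fun q : ℝ × ℝ => q.1 / 2 + 1 / 2 * Real.log (1 + Real.exp (ginv ρ hρ0 hρ1 (q.2 - q.1))) :=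
    funext fun q => Fsup_eq ρ hρ0 hρ1 q.1 q.2
  rw [heq]
  intro q _
  apply AnalyticAt.add
  · exact analyticAt_fst.div analyticAt_const (by norm_num)
  · apply analyticAt_const.mul
    apply AnalyticAt.comp (analyticAt_rlog (by positivity))
    apply analyticAt_const.add
    apply AnalyticAt.comp analyticAt_rexp
    exact (analyticAt_ginv ρ hρ0 hρ1 _).comp (analyticAt_snd.sub analyticAt_fst)
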